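/- For any infinite sequence X over a finite alphabet Σ with |Σ| ≥ 2, any d ≥ 1, and any j ∈ {0,1,…,d−1}: dim_FS(A_{d,j}) ≥ dim_FS^{{A_{d,k} : k ≠ j}}(A_{d,j}) ≥ d·( dim_FS(X) − (d−1)/d ). -/

import Mathlib

open Filter

/-- A finite-state gambler over alphabet `α` with state space `Fin (m+1)`. -/
structure FSG (α : Type) [Fintype α] (m : ℕ) where
  δ : Fin (m + 1) → α → Fin (m + 1)
  bet : Fin (m + 1) → α → ℚ
  bet_nonneg : ∀ q a, 0 ≤ bet q a
  bet_sum : ∀ q, ∑ a, bet q a = 1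
  q₀ : Fin (m + 1)

namespace FSG

variable {α : Type} [Fintype α] {m : ℕ}

/-- The state reached after reading the first `n` symbols of `X`. -/
def state (G : FSG α m) (X : ℕ → α) : ℕ → Fin (m + 1)
  | 0 => G.q₀
  | n + 1 => G.δ (G.state X n) (X n)

/-- The value of the `s`-gale of `G` on the prefix `X[:n]`. -/
noncomputable def capital (G : FSG α m) (s : ℝ) (X : ℕ → α) : ℕ → ℝ
  | 0 => 1
  | n + 1 => (Fintype.card α : ℝ) ^ s * (G.bet (G.state X n) (X n) : ℝ) * G.capital s X n

/-- The `s`-gale of `G` succeeds on `X` : `limsup_n d(X[:n]) = ∞`. -/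
def Succeeds (G : FSG α m) (s : ℝ) (X : ℕ → α) : Prop :=
  ∀ C : ℝ, ∃ n, C < G.capital s X n

/-- The `s`-gale of `G` strongly succeeds on `X` : `liminf_n d(X[:n]) = ∞`. -/
def StrSucceeds (G : FSG α m) (s : ℝ) (X : ℕ → α) : Prop :=
  Tendsto (G.capital s X) atTop atTop

end FSG

/-- Finite-state dimension of a sequence. -/
noncomputable def dimFS {α : Type} [Fintype α] (X : ℕ → α) : ℝ :=
  sInf {s : ℝ | 0 ≤ s ∧ ∃ (m : ℕ) (G : FSG α m), G.Succeeds s X}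

/-- Finite-state strong dimension of a sequence. -/
noncomputable def DimFS {α : Type} [Fintype α] (X : ℕ → α) : ℝ :=
  sInf {s : ℝ | 0 ≤ s ∧ ∃ (m : ℕ) (G : FSG α m), G.StrSucceeds s X}

/-- A finite-state relative gambler over input alphabet `α`, oracle alphabet `β`,
oracle window length `ℓ`, with state space `Fin (m+1)`. -/
structure FSRG (α β : Type) [Fintype α] [Fintype β] (ℓ m : ℕ) where
  δ : Fin (m + 1) → (Fin ℓ → β) → α → Fin (m + 1)
  bet : Fin (m + 1) → (Fin ℓ → β) → α → ℚ
  bet_nonneg : ∀ q y a, 0 ≤ bet q y a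
  bet_sum : ∀ q y, ∑ a, bet q y a = 1
  q₀ : Fin (m + 1)

namespace FSRG

variable {α β : Type} [Fintype α] [Fintype β] {ℓ m : ℕ}

/-- The state reached after reading the first `n` symbols of `X`, with oracle `Y`
(the oracle window at step `i` being `Y[i:i+ℓ]`). -/
def state (G : FSRG α β ℓ m) (Y : ℕ → β) (X : ℕ → α) : ℕ → Fin (m + 1)
  | 0 => G.q₀
  | n + 1 => G.δ (G.state Y X n) (fun j => Y (n + j.val)) (X n)

/-- The value of the `s`-gale of `G` with oracle `Y` on the prefix `X[:n]`. -/
noncomputable def capital (G : FSRG α β ℓ m) (s : ℝ) (Y : ℕ → β) (X : ℕ → α) : ℕ → ℝ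
  | 0 => 1
  | n + 1 =>
      (Fintype.card α : ℝ) ^ s * (G.bet (G.state Y X n) (fun j => Y (n + j.val)) (X n) : ℝ) *
        G.capital s Y X n

/-- Success: `limsup_n d(X[:n]) = ∞`. -/
def Succeeds (G : FSRG α β ℓ m) (s : ℝ) (Y : ℕ → β) (X : ℕ → α) : Prop :=
  ∀ C : ℝ, ∃ n, C < G.capital s Y X n

/-- Strong success: `liminf_n d(X[:n]) = ∞`. -/
def StrSucceeds (G : FSRG α β ℓ m) (s : ℝ) (Y : ℕ → β) (X : ℕ → α) : Prop :=
  Tendsto (G.capital s Y X) atTop atTop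

end FSRG

/-- Finite-state relative dimension `dim_FS^Y(X)`. -/
noncomputable def dimFSRel {α β : Type} [Fintype α] [Fintype β] (X : ℕ → α) (Y : ℕ → β) : ℝ :=
  sInf {s : ℝ | 0 ≤ s ∧ ∃ (ℓ m : ℕ) (G : FSRG α β ℓ m), G.Succeeds s Y X}

/-- Finite-state relative strong dimension `Dim_FS^Y(X)`. -/
noncomputable def DimFSRel {α β : Type} [Fintype α] [Fintype β] (X : ℕ → α) (Y : ℕ → β) : ℝ :=
  sInf {s : ℝ | 0 ≤ s ∧ ∃ (ℓ m : ℕ) (G : FSRG α β ℓ m), G.StrSucceeds s Y X}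

open Classical in
/-- `N(u,x;v,y)`: the number of indices `i < k` such that the `i`-th disjoint block of
length `ℓ` of `X` equals `u` and that of `Y` equals `v`. -/
noncomputable def blockCount {α β : Type} (X : ℕ → α) (Y : ℕ → β) (ℓ k : ℕ)
    (u : Fin ℓ → α) (v : Fin ℓ → β) : ℕ :=
  ((Finset.range k).filter fun i =>
    (∀ j : Fin ℓ, X (i * ℓ + j.val) = u j) ∧ ∀ j : Fin ℓ, Y (i * ℓ + j.val) = v j).card

/-- The `ℓ`-length conditional block entropy `H_ℓ(X[:kℓ] | Y[:kℓ])`.  (Terms with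
`N(u,x;v,y) = 0` vanish since `0 · log 0 = 0` under Mathlib's convention `log 0 = 0`.) -/
noncomputable def condBlockEntropy {α β : Type} [Fintype α] [Fintype β]
    (X : ℕ → α) (Y : ℕ → β) (ℓ k : ℕ) : ℝ :=
  -(1 / (ℓ * Real.log (Fintype.card α))) *
    ∑ v : Fin ℓ → β, ∑ u : Fin ℓ → α,
      ((blockCount X Y ℓ k u v : ℝ) / k) *
        Real.log ((blockCount X Y ℓ k u v : ℝ) /
          ∑ u' : Fin ℓ → α, (blockCount X Y ℓ k u' v : ℝ))

/-- `H_ℓ(X|Y) = liminf_{k → ∞} H_ℓ(X[:kℓ] | Y[:kℓ])`. -/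
noncomputable def relBlockEntropyAt {α β : Type} [Fintype α] [Fintype β]
    (X : ℕ → α) (Y : ℕ → β) (ℓ : ℕ) : ℝ :=
  liminf (fun k => condBlockEntropy X Y ℓ k) atTop

/-- `H(X|Y) = inf_{ℓ ≥ 1} H_ℓ(X|Y)`. -/
noncomputable def relBlockEntropy {α β : Type} [Fintype α] [Fintype β]
    (X : ℕ → α) (Y : ℕ → β) : ℝ :=
  ⨅ ℓ : ℕ, relBlockEntropyAt X Y (ℓ + 1)

/-- `H̄_ℓ(X|Y) = limsup_{k → ∞} H_ℓ(X[:kℓ] | Y[:kℓ])`. -/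
noncomputable def relUpperBlockEntropyAt {α β : Type} [Fintype α] [Fintype β]
    (X : ℕ → α) (Y : ℕ → β) (ℓ : ℕ) : ℝ :=
  limsup (fun k => condBlockEntropy X Y ℓ k) atTop

/-- `H̄(X|Y) = inf_{ℓ ≥ 1} H̄_ℓ(X|Y)`. -/
noncomputable def relUpperBlockEntropy {α β : Type} [Fintype α] [Fintype β]
    (X : ℕ → α) (Y : ℕ → β) : ℝ :=
  ⨅ ℓ : ℕ, relUpperBlockEntropyAt X Y (ℓ + 1)

/-- The arithmetic-progression subsequence `A_{d,a}(X) = X[a] X[a+d] X[a+2d] …`. -/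
def AP {α : Type} (X : ℕ → α) (d a : ℕ) : ℕ → α := fun n => X (a + n * d)

/-- The product sequence of a family of sequences: its `n`-th symbol is the tuple
of the `n`-th symbols. -/
def prodSeq {α ι : Type} (Ys : ι → ℕ → α) : ℕ → ι → α := fun n i => Ys i n

/-- Relative dimension with a finite family of oracle sequences, via the product sequence. -/
noncomputable def dimFSRelFam {α ι : Type} [Fintype α] [Fintype ι] [DecidableEq ι]
    (X : ℕ → α) (Ys : ι → ℕ → α) : ℝ :=
  dimFSRel X (prodSeq Ys)

/-- Relative strong dimension with a finite family of oracle sequences. -/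
noncomputable def DimFSRelFam {α ι : Type} [Fintype α] [Fintype ι] [DecidableEq ι]
    (X : ℕ → α) (Ys : ι → ℕ → α) : ℝ :=
  DimFSRel X (prodSeq Ys)

/-- The interleaving `Y₀ ⊕ ⋯ ⊕ Y_{n-1}`: the `i`-th symbol is `Y_{i mod n}[⌊i/n⌋]`. -/
def interleave {α : Type} {n : ℕ} (hn : 0 < n) (Ys : Fin n → ℕ → α) : ℕ → α :=
  fun i => Ys ⟨i % n, Nat.mod_lt i hn⟩ (i / n)

/-- The interleaving `A ⊕ B` of two sequences. -/
def interleave2 {α : Type} (A B : ℕ → α) : ℕ → α :=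
  fun i => if i % 2 = 0 then A (i / 2) else B (i / 2)

namespace APX
open Finset
set_option linter.unusedSectionVars false
set_option linter.unusedVariables false

variable {α : Type} [Fintype α]

section Bridge

variable {S : Type} [Fintype S] [Nonempty S]
variable (Aδ : S → α → S) (Abet : S → α → ℚ) (Aq₀ : S)

/-- run of an abstract machine -/
def astate (X : ℕ → α) : ℕ → S
  | 0 => Aq₀
  | n + 1 => Aδ (astate X n) (X n)

noncomputable def acap (t : ℝ) (X : ℕ → α) : ℕ → ℝ
  | 0 => 1
  | n + 1 => (Fintype.card α : ℝ) ^ t * (Abet (astate Aδ Aq₀ X n) (X n) : ℝ) *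
      acap t X n

theorem bridge (h0 : ∀ q a, 0 ≤ Abet q a) (h1 : ∀ q, ∑ a, Abet q a = 1) :
    ∃ (m : ℕ) (G : FSG α m), ∀ (t : ℝ) (X : ℕ → α) (n : ℕ),
      G.capital t X n = acap Aδ Abet Aq₀ t X n := by
  obtain ⟨m, hm⟩ : ∃ m, Fintype.card S = m + 1 :=
    ⟨Fintype.card S - 1, (Nat.succ_pred_eq_of_pos Fintype.card_pos).symm⟩
  let e : S ≃ Fin (m + 1) := Fintype.equivFinOfCardEq hm
  refine ⟨m, ⟨fun q a => e (Aδ (e.symm q) a), fun q a => Abet (e.symm q) a,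
    fun q a => h0 _ a, fun q => h1 _, e Aq₀⟩, ?_⟩
  intro t X n
  set G : FSG α m := ⟨fun q a => e (Aδ (e.symm q) a), fun q a => Abet (e.symm q) a,
    fun q a => h0 _ a, fun q => h1 _, e Aq₀⟩ with hG
  have hst : ∀ k, G.state X k = e (astate Aδ Aq₀ X k) := by
    intro k
    induction k with
    | zero => rfl
    | succ k ih =>
      rw [show G.state X (k+1) = G.δ (G.state X k) (X k) from rfl, ih]
      simp [astate, hG]
  induction n with
  | zero => rfl
  | succ n ih =>
    rw [show G.capital t X (n+1) = (Fintype.card α : ℝ) ^ t * (G.bet (G.state X n) (X n) : ℝ) * G.capital t X n from rfl, ih, hst]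
    simp [acap, hG]

end Bridge

section Count

/-- number of naturals `p < r` with `p % d = jv` -/
def jb (d jv r : ℕ) : ℕ := ((range r).filter fun p => p % d = jv).card

theorem jb_succ (d jv r : ℕ) :
    jb d jv (r + 1) = jb d jv r + if r % d = jv then 1 else 0 := by
  unfold jb
  rw [range_add_one, filter_insert]
  split
  · rw [card_insert_of_notMem (by simp)]
  · simp

theorem jb_formula {d jv : ℕ} (hj : jv < d) (r : ℕ) :
    jb d jv r = r / d + if jv < r % d then 1 else 0 := by
  have hd : 0 < d := lt_of_le_of_lt (Nat.zero_le jv) hj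
  induction r with
  | zero => simp [jb]
  | succ r ih =>
    rw [jb_succ, ih]
    rcases Nat.lt_or_ge (r % d + 1) d with h | h
    · have hmod : (r + 1) % d = r % d + 1 := by
        conv_lhs => rw [← Nat.div_add_mod r d]
        rw [Nat.add_assoc, Nat.mul_add_mod]
        exact Nat.mod_eq_of_lt h
      have hdiv : (r + 1) / d = r / d := by
        conv_lhs => rw [← Nat.div_add_mod r d]
        rw [Nat.add_assoc, Nat.mul_add_div hd]
        simp [Nat.div_eq_of_lt h]
      rw [hmod, hdiv]
      rcases Nat.lt_trichotomy jv (r % d) with h1 | h1 | h1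
      · have h2 : jv < r % d + 1 := Nat.lt_succ_of_lt h1
        have h3 : ¬ (r % d = jv) := Nat.ne_of_gt h1
        simp [h1, h2, h3]
      · have h2 : jv < r % d + 1 := by omega
        have h3 : ¬ (jv < r % d) := by omega
        have h4 : r % d = jv := h1.symm
        simp [h2, h3, h4]
      · have h2 : ¬ (jv < r % d + 1) := by omega
        have h3 : ¬ (jv < r % d) := by omega
        have h4 : ¬ (r % d = jv) := by omega
        simp [h2, h3, h4]
    · -- r % d + 1 = d
      have heq : r % d + 1 = d := by
        have := Nat.mod_lt r hd
        omega
      have hmod : (r + 1) % d = 0 := by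
        conv_lhs => rw [← Nat.div_add_mod r d, Nat.add_assoc, heq]
        simp [Nat.mul_add_mod, Nat.add_mul_mod_self_left]
      have hdiv : (r + 1) / d = r / d + 1 := by
        conv_lhs => rw [← Nat.div_add_mod r d, Nat.add_assoc, heq]
        rw [Nat.mul_add_div hd]
        simp [Nat.div_self hd]
      rw [hmod, hdiv]
      have h3 : jv < r % d ∨ r % d = jv := by omega
      have h5 : ¬ (jv < 0) := by omega
      rcases h3 with h3 | h3
      · have h4 : ¬ (r % d = jv) := by omega
        simp [h3, h4, h5]
      · have h4 : ¬ (jv < r % d) := by omega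
        simp [h3, h4, h5]

theorem jb_mul {d jv : ℕ} (hj : jv < d) (K : ℕ) : jb d jv (K * d) = K := by
  have hd : 0 < d := lt_of_le_of_lt (Nat.zero_le jv) hj
  rw [jb_formula hj]
  rw [Nat.mul_div_cancel _ hd, Nat.mul_mod_left]
  simp

theorem lt_of_lt_jb {d jv : ℕ} (hj : jv < d) {i r : ℕ} (h : i < jb d jv r) :
    i * d + jv < r := by
  have hd : 0 < d := lt_of_le_of_lt (Nat.zero_le jv) hj
  rw [jb_formula hj] at h
  have hdm := Nat.div_add_mod r d
  have hdm2 : r / d * d = d * (r / d) := Nat.mul_comm _ _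
  split at h
  · -- jv < r % d, i ≤ r / d
    have hi : i ≤ r / d := by omega
    have : i * d ≤ r / d * d := Nat.mul_le_mul_right d hi
    omega
  · have hi : i + 1 ≤ r / d := by omega
    have : (i + 1) * d ≤ r / d * d := Nat.mul_le_mul_right d hi
    have h2 : i * d + d ≤ r / d * d := by
      rw [Nat.succ_mul] at this; omega
    omega

theorem jb_mono (d jv : ℕ) {r r' : ℕ} (h : r ≤ r') : jb d jv r ≤ jb d jv r' :=
  Finset.card_le_card (Finset.filter_subset_filter _ (Finset.range_subset_range.mpr h))

theorem jb_le {d jv : ℕ} (hj : jv < d) {r K : ℕ} (h : r ≤ K * d) :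
    jb d jv r ≤ K := (jb_mono d jv h).trans (le_of_eq (jb_mul hj K))

/-- number of naturals `p < r` with `p % d ≠ jv` -/
theorem njc_card {d jv : ℕ} (hj : jv < d) (K : ℕ) :
    ((range (K * d)).filter fun p => ¬ p % d = jv).card = K * d - K := by
  have h := Finset.card_filter_add_card_filter_not
    (s := range (K * d)) (p := fun p => p % d = jv)
  have h2 : jb d jv (K * d) = K := jb_mul hj K
  unfold jb at h2
  simp only [Finset.card_range] at h
  omega

end Count

section Main

variable {α : Type} [Fintype α] [Nonempty α] [DecidableEq α]
variable {d : ℕ} {ℓ m : ℕ}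

/-- the oracle window built from an assignment `τ` of `X`-symbols -/
def win (j : Fin d) (ℓ : ℕ) (τ : ℕ → α) (i : ℕ) : Fin ℓ → ({k : Fin d // k ≠ j} → α) :=
  fun v k => τ ((i + v.val) * d + (k : Fin d).val)

/-- the chain of states of the relative gambler along `τ` -/
def locq (j : Fin d) (G : FSRG α ({k : Fin d // k ≠ j} → α) ℓ m) (τ : ℕ → α)
    (q : Fin (m + 1)) : ℕ → Fin (m + 1)
  | 0 => q
  | i + 1 => G.δ (locq j G τ q i) (win j ℓ τ i) (τ (i * d + j.val))

/-- product of the bets of the relative gambler along `τ` -/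
def wt (j : Fin d) (G : FSRG α ({k : Fin d // k ≠ j} → α) ℓ m) (τ : ℕ → α)
    (q : Fin (m + 1)) (N : ℕ) : ℚ :=
  ∏ i ∈ range N, G.bet (locq j G τ q i) (win j ℓ τ i) (τ (i * d + j.val))

noncomputable def extz [Nonempty α] (E : ℕ) (z : Fin E → α) : ℕ → α :=
  fun p => if h : p < E then z ⟨p, h⟩ else Classical.arbitrary α

def comb (r : ℕ) (σ τ' : ℕ → α) : ℕ → α := fun p => if p < r then σ p else τ' p

/-- the (unnormalized) block measure -/
noncomputable def num (j : Fin d) (G : FSRG α ({k : Fin d // k ≠ j} → α) ℓ m) (E : ℕ)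
    (σ : ℕ → α) (r : ℕ) : ℚ :=
  ∑ q : Fin (m + 1), ∑ z : Fin E → α, wt j G (comb r σ (extz E z)) q (jb d j.val r)

variable {j : Fin d} {G : FSRG α ({k : Fin d // k ≠ j} → α) ℓ m}

theorem win_congr {τ τ' : ℕ → α} {i : ℕ}
    (h : ∀ p, ¬ p % d = j.val → p < (i + ℓ) * d → τ p = τ' p) :
    win j ℓ τ i = win j ℓ τ' i := by
  funext v k
  apply h
  · have hk : (k : Fin d).val < d := (k : Fin d).isLt
    have hm : ((i + v.val) * d + (k : Fin d).val) % d = (k : Fin d).val := by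
      rw [Nat.add_comm, Nat.add_mul_mod_self_right]; exact Nat.mod_eq_of_lt hk
    rw [hm]; intro hc; exact k.2 (Fin.ext hc)
  · have hk : (k : Fin d).val < d := (k : Fin d).isLt
    have h1 : (i + v.val) * d + (k : Fin d).val < (i + v.val + 1) * d := by
      rw [Nat.succ_mul]; omega
    have h2 : (i + v.val + 1) * d ≤ (i + ℓ) * d :=
      Nat.mul_le_mul_right d (by have := v.isLt; omega)
    omega

theorem locq_congr {τ τ' : ℕ → α} {q : Fin (m + 1)} {N : ℕ}
    (h1 : ∀ p, ¬ p % d = j.val → p < (N + ℓ) * d → τ p = τ' p)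
    (h2 : ∀ i, i < N → τ (i * d + j.val) = τ' (i * d + j.val)) :
    locq j G τ q N = locq j G τ' q N := by
  induction N with
  | zero => rfl
  | succ N ih =>
    have hw : ∀ p, p < (N + ℓ) * d → p < (N + 1 + ℓ) * d := by
      intro p hp
      exact lt_of_lt_of_le hp (Nat.mul_le_mul_right d (by omega))
    simp only [locq]
    rw [ih (fun p hp hlt => h1 p hp (hw p hlt)) (fun i hi => h2 i (Nat.lt_succ_of_lt hi)),
      win_congr (fun p hp hlt => h1 p hp (lt_of_lt_of_le hlt (Nat.mul_le_mul_right d (by omega)))),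
      h2 N (Nat.lt_succ_self N)]

theorem wt_congr {τ τ' : ℕ → α} {q : Fin (m + 1)} {N : ℕ}
    (h1 : ∀ p, ¬ p % d = j.val → p < (N + ℓ) * d → τ p = τ' p)
    (h2 : ∀ i, i < N → τ (i * d + j.val) = τ' (i * d + j.val)) :
    wt j G τ q N = wt j G τ' q N := by
  unfold wt
  refine Finset.prod_congr rfl ?_
  intro i hi
  rw [Finset.mem_range] at hi
  have hb : ∀ p, p < (i + ℓ) * d → p < (N + ℓ) * d := by
    intro p hp
    exact lt_of_lt_of_le hp (Nat.mul_le_mul_right d (by omega))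
  rw [locq_congr (fun p hp hlt => h1 p hp (hb p hlt)) (fun i' hi' => h2 i' (hi'.trans hi)),
    win_congr (fun p hp hlt => h1 p hp (hb p hlt)), h2 i hi]

theorem wt_nonneg {τ : ℕ → α} {q : Fin (m + 1)} {N : ℕ} : 0 ≤ wt j G τ q N :=
  Finset.prod_nonneg fun i _ => G.bet_nonneg _ _ _

theorem wt_succ (τ : ℕ → α) (q : Fin (m + 1)) (N : ℕ) :
    wt j G τ q (N + 1) = wt j G τ q N *
      G.bet (locq j G τ q N) (win j ℓ τ N) (τ (N * d + j.val)) :=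
  Finset.prod_range_succ _ _

theorem num_congr {E : ℕ} {σ σ' : ℕ → α} {r : ℕ} (h : ∀ p, p < r → σ p = σ' p) :
    num j G E σ r = num j G E σ' r := by
  unfold num
  refine Finset.sum_congr rfl fun q _ => Finset.sum_congr rfl fun z _ => ?_
  have : comb r σ (extz E z) = comb r σ' (extz E z) := by
    funext p
    unfold comb
    split
    · exact h p (by assumption)
    · rfl
  rw [this]

theorem num_nonneg {E : ℕ} {σ : ℕ → α} {r : ℕ} : 0 ≤ num j G E σ r :=
  Finset.sum_nonneg fun q _ => Finset.sum_nonneg fun z _ => wt_nonneg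

theorem num_zero {E : ℕ} (σ : ℕ → α) :
    num j G E σ 0 = (m + 1 : ℚ) * (Fintype.card α : ℚ) ^ E := by
  unfold num
  have hjb : jb d j.val 0 = 0 := by simp [jb]
  simp only [hjb]
  have hwt : ∀ (q : Fin (m+1)) (z : Fin E → α), wt j G (comb 0 σ (extz E z)) q 0 = 1 := by
    intro q z; simp [wt]
  simp only [hwt]
  rw [Finset.sum_const, Finset.sum_const]
  simp [Finset.card_univ, Fintype.card_fun]

theorem sum_sum_update {E : ℕ} (f : (Fin E → α) → ℚ) (i : Fin E) :
    ∑ a : α, ∑ z : Fin E → α, f (Function.update z i a)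
      = (Fintype.card α : ℚ) * ∑ z : Fin E → α, f z := by
  classical
  let e := Equiv.piSplitAt i (fun _ : Fin E => α)
  have key : ∀ (a x : α) (w : ∀ p : {p : Fin E // p ≠ i}, α),
      Function.update (e.symm (x, w)) i a = e.symm (a, w) := by
    intro a x w
    funext p
    by_cases hp : p = i
    · subst hp
      simp [e, Equiv.piSplitAt_symm_apply, Function.update_self]
    · simp [e, Equiv.piSplitAt_symm_apply, Function.update_of_ne hp, hp]
  calc ∑ a : α, ∑ z : Fin E → α, f (Function.update z i a)
      = ∑ a : α, ∑ p : α × (∀ _ : {p : Fin E // p ≠ i}, α),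
          f (Function.update (e.symm p) i a) := by
        exact Finset.sum_congr rfl fun a _ =>
          (Equiv.sum_comp e.symm fun z => f (Function.update z i a)).symm
    _ = ∑ a : α, ∑ x : α, ∑ w : (∀ _ : {p : Fin E // p ≠ i}, α), f (e.symm (a, w)) := by
        refine Finset.sum_congr rfl fun a _ => ?_
        rw [Fintype.sum_prod_type]
        exact Finset.sum_congr rfl fun x _ => Finset.sum_congr rfl fun w _ => by rw [key]
    _ = ∑ a : α, (Fintype.card α : ℚ) * ∑ w : (∀ _ : {p : Fin E // p ≠ i}, α),
          f (e.symm (a, w)) := by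
        refine Finset.sum_congr rfl fun a _ => ?_
        rw [Finset.sum_const, Finset.card_univ, nsmul_eq_mul]
    _ = (Fintype.card α : ℚ) * ∑ a : α, ∑ w : (∀ _ : {p : Fin E // p ≠ i}, α),
          f (e.symm (a, w)) := by rw [Finset.mul_sum]
    _ = (Fintype.card α : ℚ) * ∑ p : α × (∀ _ : {p : Fin E // p ≠ i}, α), f (e.symm p) := by
        rw [Fintype.sum_prod_type]
    _ = (Fintype.card α : ℚ) * ∑ z : Fin E → α, f z := by rw [Equiv.sum_comp e.symm f]

theorem comb_update_ne {σ τ' : ℕ → α} {r p : ℕ} (a : α) (hp : p ≠ r) :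
    comb (r + 1) (Function.update σ r a) τ' p = comb r σ τ' p := by
  unfold comb
  rcases Nat.lt_trichotomy p r with h | h | h
  · rw [if_pos (by omega), if_pos h, Function.update_of_ne hp]
  · exact absurd h hp
  · rw [if_neg (by omega), if_neg (by omega)]

theorem comb_update_self {σ τ' : ℕ → α} {r : ℕ} (a : α) :
    comb (r + 1) (Function.update σ r a) τ' r = a := by
  unfold comb
  rw [if_pos (by omega), Function.update_self]

theorem comb_update_extz {E : ℕ} {σ : ℕ → α} {z : Fin E → α} {r : ℕ} (hrE : r < E) (a : α) :
    comb (r + 1) (Function.update σ r a) (extz E z)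
      = comb r σ (extz E (Function.update z ⟨r, hrE⟩ a)) := by
  funext p
  rcases Nat.lt_trichotomy p r with h | h | h
  · unfold comb
    rw [if_pos (by omega), if_pos h, Function.update_of_ne (by omega)]
  · subst h
    unfold comb extz
    rw [if_pos (by omega), if_neg (by omega), Function.update_self, dif_pos hrE,
      Function.update_self]
  · unfold comb extz
    rw [if_neg (by omega), if_neg (by omega)]
    split
    · rw [Function.update_of_ne (by intro hc; apply Nat.ne_of_gt h; exact congrArg Fin.val hc)]
    · rfl

theorem num_step {E : ℕ} {σ : ℕ → α} {r : ℕ} (hrE : r < E) :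
    ∑ a : α, num j G E (Function.update σ r a) (r + 1)
      = (if r % d = j.val then 1 else (Fintype.card α : ℚ)) * num j G E σ r := by
  unfold num
  rw [Finset.sum_comm, Finset.mul_sum]
  refine Finset.sum_congr rfl fun q _ => ?_
  by_cases hr : r % d = j.val
  · -- betting position
    have hjb1 : jb d j.val (r + 1) = jb d j.val r + 1 := by rw [jb_succ]; simp [hr]
    set Nb := jb d j.val r with hNb
    have hNbr : Nb * d + j.val = r := by
      have h1 : jb d j.val r = r / d + if j.val < r % d then 1 else 0 := jb_formula j.isLt r
      rw [hr] at h1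
      simp at h1
      have h2 := Nat.div_add_mod r d
      rw [hNb, h1, hr] at *
      have : r / d * d = d * (r / d) := Nat.mul_comm _ _
      omega
    have key : ∀ a : α, ∀ z : Fin E → α,
        wt j G (comb (r + 1) (Function.update σ r a) (extz E z)) q (Nb + 1)
          = wt j G (comb r σ (extz E z)) q Nb *
            G.bet (locq j G (comb r σ (extz E z)) q Nb)
              (win j ℓ (comb r σ (extz E z)) Nb) a := by
      intro a z
      set τ := comb r σ (extz E z) with hτ
      set τa := comb (r + 1) (Function.update σ r a) (extz E z) with hτa
      have hne : ∀ p, p ≠ r → τa p = τ p := fun p hp => comb_update_ne a hp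
      have h1 : ∀ p, ¬ p % d = j.val → p < (Nb + ℓ) * d → τa p = τ p := by
        intro p hp _
        exact hne p (by intro hc; subst hc; exact hp hr)
      have h2 : ∀ i, i < Nb → τa (i * d + j.val) = τ (i * d + j.val) := by
        intro i hi
        exact hne _ (Nat.ne_of_lt (lt_of_lt_jb j.isLt hi))
      rw [wt_succ, wt_congr h1 h2, locq_congr h1 h2, win_congr
        (fun p hp hlt => hne p (by intro hc; subst hc; exact hp hr)), hNbr]
      have : τa r = a := comb_update_self a
      rw [this]
    rw [hjb1]
    simp only [key]
    rw [Finset.sum_comm]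
    rw [if_pos hr, one_mul]
    refine Finset.sum_congr rfl fun z _ => ?_
    rw [← Finset.mul_sum, G.bet_sum, mul_one]
  · -- oracle position
    have hjb1 : jb d j.val (r + 1) = jb d j.val r := by rw [jb_succ]; simp [hr]
    rw [hjb1, if_neg hr]
    have hcomb : ∀ (a : α) (z : Fin E → α),
        comb (r + 1) (Function.update σ r a) (extz E z)
          = comb r σ (extz E (Function.update z ⟨r, hrE⟩ a)) := fun a z =>
      comb_update_extz hrE a
    simp only [hcomb]
    exact sum_sum_update (fun z => wt j G (comb r σ (extz E z)) q (jb d j.val r)) ⟨r, hrE⟩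

theorem sum_ge_filter {E : ℕ} (f : (Fin E → α) → ℚ) (hf : ∀ z, 0 ≤ f z)
    (F : Finset (Fin E)) (w : Fin E → α) (v : ℚ) (hv : 0 ≤ v)
    (hc : ∀ z : Fin E → α, (∀ p ∈ F, z p = w p) → f z = v) :
    (Fintype.card α : ℚ) ^ (E - F.card) * v ≤ ∑ z : Fin E → α, f z := by
  classical
  set T : Finset (Fin E → α) := Finset.univ.filter (fun z => ∀ p ∈ F, z p = w p) with hT
  have hsub : ∑ z ∈ T, f z ≤ ∑ z : Fin E → α, f z :=
    Finset.sum_le_sum_of_subset_of_nonneg (Finset.filter_subset _ _)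
      (fun z _ _ => hf z)
  have hval : ∑ z ∈ T, f z = (T.card : ℚ) * v := by
    rw [Finset.sum_congr rfl (fun z hz => hc z (by simpa [hT] using hz)),
      Finset.sum_const, nsmul_eq_mul]
  have hcard : Fintype.card α ^ (E - F.card) ≤ T.card := by
    have h1 : Fintype.card ({p : Fin E // p ∈ Fᶜ} → α) = Fintype.card α ^ (E - F.card) := by
      rw [Fintype.card_fun, Fintype.card_coe, Finset.card_compl, Fintype.card_fin]
    rw [← h1, ← Finset.card_univ (α := {p : Fin E // p ∈ Fᶜ} → α)]
    refine Finset.card_le_card_of_injOn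
      (fun g p => if h : p ∈ F then w p else g ⟨p, by simp [h]⟩) ?_ ?_
    · intro g _
      simp only [hT, Finset.mem_coe, Finset.mem_filter, Finset.mem_univ, true_and]
      intro p hp
      rw [dif_pos hp]
    · intro g _ g' _ hgg
      funext p
      have hnp : (p : Fin E) ∉ F := Finset.mem_compl.mp p.2
      have h2 := congrFun hgg p.val
      simp only [dif_neg hnp] at h2
      convert h2 <;> rw [Fin.eta]
  calc (Fintype.card α : ℚ) ^ (E - F.card) * v
      ≤ (T.card : ℚ) * v := by
        refine mul_le_mul_of_nonneg_right ?_ hv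
        exact_mod_cast Nat.cast_le.mpr hcard
    _ = ∑ z ∈ T, f z := hval.symm
    _ ≤ ∑ z : Fin E → α, f z := hsub

/-- read a buffer as an infinite string -/
noncomputable def bufσ {L : ℕ} (buf : Fin L → α) : ℕ → α :=
  fun p => if h : p < L then buf ⟨p, h⟩ else Classical.arbitrary α

variable (j G) in
noncomputable def machBet (J : ℕ) : (Fin (J * d) × (Fin (J * d) → α)) → α → ℚ :=
  fun st a =>
    if num j G ((J + ℓ) * d) (bufσ st.2) st.1.val = 0 then (Fintype.card α : ℚ)⁻¹
    else num j G ((J + ℓ) * d) (Function.update (bufσ st.2) st.1.val a) (st.1.val + 1) /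
      ((if st.1.val % d = j.val then 1 else (Fintype.card α : ℚ)) *
        num j G ((J + ℓ) * d) (bufσ st.2) st.1.val)

def machδ (J : ℕ) : (Fin (J * d) × (Fin (J * d) → α)) → α →
    (Fin (J * d) × (Fin (J * d) → α)) :=
  fun st a =>
    if h : st.1.val + 1 < J * d then (⟨st.1.val + 1, h⟩, Function.update st.2 st.1 a)
    else (⟨0, st.1.pos⟩, Function.update st.2 st.1 a)

theorem machBet_nonneg (J : ℕ) (st : Fin (J * d) × (Fin (J * d) → α)) (a : α) :
    0 ≤ machBet j G J st a := by
  unfold machBet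
  split
  · positivity
  · refine div_nonneg num_nonneg (mul_nonneg ?_ num_nonneg)
    split
    · norm_num
    · positivity

theorem machBet_sum (J : ℕ) (st : Fin (J * d) × (Fin (J * d) → α)) :
    ∑ a : α, machBet j G J st a = 1 := by
  have hcard : (0 : ℚ) < (Fintype.card α : ℚ) := by
    exact_mod_cast Fintype.card_pos
  unfold machBet
  split
  · rw [Finset.sum_const, Finset.card_univ, nsmul_eq_mul]
    rw [mul_inv_cancel₀ (ne_of_gt hcard)]
  · rename_i hnz
    have hrE : st.1.val < (J + ℓ) * d := lt_of_lt_of_le st.1.isLt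
      (Nat.mul_le_mul_right d (Nat.le_add_right J ℓ))
    rw [← Finset.sum_div, num_step hrE, div_self]
    refine mul_ne_zero ?_ hnz
    split
    · norm_num
    · exact ne_of_gt hcard

noncomputable def machQ0 (J : ℕ) (hL : 0 < J * d) : Fin (J * d) × (Fin (J * d) → α) :=
  (⟨0, hL⟩, fun _ => Classical.arbitrary α)

theorem machδ_pos {J : ℕ} (st : Fin (J * d) × (Fin (J * d) → α)) (a : α)
    (h : st.1.val + 1 < J * d) :
    machδ J st a = (⟨st.1.val + 1, h⟩, Function.update st.2 st.1 a) := by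
  unfold machδ; rw [dif_pos h]

theorem machδ_neg {J : ℕ} (st : Fin (J * d) × (Fin (J * d) → α)) (a : α)
    (h : ¬ (st.1.val + 1 < J * d)) :
    machδ J st a = (⟨0, st.1.pos⟩, Function.update st.2 st.1 a) := by
  unfold machδ; rw [dif_neg h]

theorem mach_run (J : ℕ) (hL : 0 < J * d) (X : ℕ → α) (n : ℕ) :
    (astate (machδ J) (machQ0 J hL) X n).1.val = n % (J * d) ∧
    ∀ p : Fin (J * d), p.val < n % (J * d) →
      (astate (machδ J) (machQ0 J hL) X n).2 p = X ((J * d) * (n / (J * d)) + p.val) := by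
  induction n with
  | zero =>
    constructor
    · simp [astate, machQ0, Nat.zero_mod]
    · intro p hp
      simp [Nat.zero_mod] at hp
  | succ n ih =>
    obtain ⟨ih1, ih2⟩ := ih
    have hdm : (J * d) * (n / (J * d)) + n % (J * d) = n := Nat.div_add_mod n (J * d)
    have hrlt : n % (J * d) < J * d := Nat.mod_lt n hL
    have hstep : astate (machδ J) (machQ0 J hL) X (n + 1)
        = machδ J (astate (machδ J) (machQ0 J hL) X n) (X n) := rfl
    by_cases hc : n % (J * d) + 1 < J * d
    · have hmod : (n + 1) % (J * d) = n % (J * d) + 1 := by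
        conv_lhs => rw [← hdm, Nat.add_assoc]
        rw [Nat.mul_add_mod]
        exact Nat.mod_eq_of_lt hc
      have hdiv : (n + 1) / (J * d) = n / (J * d) := by
        conv_lhs => rw [← hdm, Nat.add_assoc]
        rw [Nat.mul_add_div hL]
        simp [Nat.div_eq_of_lt hc]
      have hd1 : (astate (machδ J) (machQ0 J hL) X n).1.val + 1 < J * d := by
        rw [ih1]; exact hc
      rw [hstep, machδ_pos _ _ hd1]
      constructor
      · simp [ih1, hmod]
      · intro p hp
        rw [hmod] at hp
        rw [hdiv]
        simp only
        rcases Nat.lt_or_ge p.val (n % (J * d)) with h | h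
        · rw [Function.update_of_ne (by
            intro hpe
            rw [hpe, ih1] at h
            omega), ih2 p h]
        · have hpv : p.val = n % (J * d) := by omega
          have hpe : p = (astate (machδ J) (machQ0 J hL) X n).1 := by
            apply Fin.ext; rw [hpv, ih1]
          rw [hpe, Function.update_self]
          congr 1
          rw [← hpe, hpv]
          omega
    · have hmod : (n + 1) % (J * d) = 0 := by
        have hre : n % (J * d) + 1 = J * d := by omega
        conv_lhs => rw [← hdm, Nat.add_assoc, hre, ← Nat.mul_succ]
        exact Nat.mul_mod_right (J * d) _
      have hd1 : ¬ ((astate (machδ J) (machQ0 J hL) X n).1.val + 1 < J * d) := by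
        rw [ih1]; exact hc
      rw [hstep, machδ_neg _ _ hd1]
      constructor
      · simp [hmod]
      · intro p hp
        rw [hmod] at hp
        omega

variable (j G) in
/-- the exact value of the quantity multiplying `c^{tn}` in the machine capital -/
noncomputable def Qf (J : ℕ) (X : ℕ → α) (n : ℕ) : ℚ :=
  (∏ b' ∈ range (n / (J * d)),
      num j G ((J + ℓ) * d) (fun p => X ((J * d) * b' + p)) (J * d)) *
    num j G ((J + ℓ) * d) (fun p => X ((J * d) * (n / (J * d)) + p)) (n % (J * d)) /
  (((m + 1 : ℚ) * (Fintype.card α : ℚ) ^ ((J + ℓ) * d)) ^ (n / (J * d) + 1) *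
    ∏ p ∈ range n, (if p % d = j.val then 1 else (Fintype.card α : ℚ)))

theorem mach_inv (J : ℕ) (hL : 0 < J * d) (X : ℕ → α) (t : ℝ)
    (hpos : ∀ b r, r ≤ J * d →
      0 < num j G ((J + ℓ) * d) (fun p => X ((J * d) * b + p)) r) (n : ℕ) :
    acap (machδ J) (machBet j G J) (machQ0 J hL) t X n
      = (Fintype.card α : ℝ) ^ (t * n) * ((Qf j G J X n : ℚ) : ℝ) := by
  have hcq : (0 : ℚ) < (Fintype.card α : ℚ) := by exact_mod_cast Fintype.card_pos
  have hD : ((m + 1 : ℚ) * (Fintype.card α : ℚ) ^ ((J + ℓ) * d)) ≠ 0 := by positivity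
  have hwqpos : ∀ p : ℕ, (0:ℚ) < (if p % d = j.val then 1 else (Fintype.card α : ℚ)) := by
    intro p; split
    · norm_num
    · exact hcq
  induction n with
  | zero =>
    have h0 : Qf j G J X 0 = 1 := by
      unfold Qf
      rw [Nat.zero_div, Nat.zero_mod]
      simp only [Finset.range_zero, Finset.prod_empty, one_mul, mul_one, Nat.zero_add, pow_one]
      rw [num_zero]
      exact div_self hD
    rw [h0]
    simp [acap, Real.rpow_zero]
  | succ n ih =>
    set b := n / (J * d) with hb
    set r := n % (J * d) with hr
    have hdm : (J * d) * b + r = n := Nat.div_add_mod n (J * d)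
    have hrlt : r < J * d := Nat.mod_lt n hL
    have hrun := mach_run J hL X n
    obtain ⟨hrun1, hrun2⟩ := hrun
    -- the bet value
    have hσ : ∀ p, p < r → bufσ (astate (machδ J) (machQ0 J hL) X n).2 p
        = X ((J * d) * b + p) := by
      intro p hp
      unfold bufσ
      rw [dif_pos (by omega : p < J * d)]
      exact hrun2 ⟨p, by omega⟩ hp
    have hnum_r : num j G ((J + ℓ) * d) (bufσ (astate (machδ J) (machQ0 J hL) X n).2)
        ((astate (machδ J) (machQ0 J hL) X n).1.val)
        = num j G ((J + ℓ) * d) (fun p => X ((J * d) * b + p)) r := by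
      rw [hrun1, ← hr]
      exact num_congr fun p hp => hσ p hp
    have hnum_r1 : num j G ((J + ℓ) * d)
        (Function.update (bufσ (astate (machδ J) (machQ0 J hL) X n).2)
          ((astate (machδ J) (machQ0 J hL) X n).1.val) (X n))
        ((astate (machδ J) (machQ0 J hL) X n).1.val + 1)
        = num j G ((J + ℓ) * d) (fun p => X ((J * d) * b + p)) (r + 1) := by
      rw [hrun1, ← hr]
      refine num_congr fun p hp => ?_
      rcases Nat.lt_or_ge p r with h | h
      · rw [Function.update_of_ne (by omega)]
        exact hσ p h
      · have hpr : p = r := by omega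
        subst hpr
        rw [Function.update_self]
        congr 1
        omega
    have hNrpos : (0:ℚ) < num j G ((J + ℓ) * d) (fun p => X ((J * d) * b + p)) r :=
      hpos b r (le_of_lt hrlt)
    have hmodd : r % d = n % d := by
      rw [hr]; exact Nat.mod_mod_of_dvd n (dvd_mul_left d J)
    have hbet : machBet j G J (astate (machδ J) (machQ0 J hL) X n) (X n)
        = num j G ((J + ℓ) * d) (fun p => X ((J * d) * b + p)) (r + 1) /
          ((if n % d = j.val then 1 else (Fintype.card α : ℚ)) *
            num j G ((J + ℓ) * d) (fun p => X ((J * d) * b + p)) r) := by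
      unfold machBet
      rw [hnum_r, hnum_r1, if_neg (ne_of_gt hNrpos)]
      rw [hrun1, ← hr, hmodd]
    -- the quotient identity
    have hWne : (∏ p ∈ range n, (if p % d = j.val then 1 else (Fintype.card α : ℚ))) ≠ 0 :=
      ne_of_gt (Finset.prod_pos fun p _ => hwqpos p)
    have hkey : Qf j G J X (n + 1)
        = (num j G ((J + ℓ) * d) (fun p => X ((J * d) * b + p)) (r + 1) /
            ((if n % d = j.val then 1 else (Fintype.card α : ℚ)) *
              num j G ((J + ℓ) * d) (fun p => X ((J * d) * b + p)) r)) * Qf j G J X n := by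
      by_cases hc : r + 1 < J * d
      · have hmod : (n + 1) % (J * d) = r + 1 := by
          conv_lhs => rw [← hdm, Nat.add_assoc]
          rw [Nat.mul_add_mod]
          exact Nat.mod_eq_of_lt hc
        have hdiv : (n + 1) / (J * d) = b := by
          conv_lhs => rw [← hdm, Nat.add_assoc]
          rw [Nat.mul_add_div hL]
          simp [Nat.div_eq_of_lt hc]
        unfold Qf
        rw [hmod, hdiv, ← hb, ← hr, Finset.prod_range_succ]
        have hwne : (if n % d = j.val then (1:ℚ) else (Fintype.card α : ℚ)) ≠ 0 :=
          ne_of_gt (hwqpos n)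
        field_simp [hwne, ne_of_gt hNrpos, hWne, hD]
      · have hre : r + 1 = J * d := by omega
        have hmod : (n + 1) % (J * d) = 0 := by
          conv_lhs => rw [← hdm, Nat.add_assoc, hre, ← Nat.mul_succ]
          exact Nat.mul_mod_right (J * d) _
        have hdiv : (n + 1) / (J * d) = b + 1 := by
          conv_lhs => rw [← hdm, Nat.add_assoc, hre, ← Nat.mul_succ]
          exact Nat.mul_div_cancel_left _ hL
        unfold Qf
        rw [hmod, hdiv, ← hb, ← hr, Finset.prod_range_succ (n := n),
          Finset.prod_range_succ (n := b), num_zero, hre]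
        have hwne : (if n % d = j.val then (1:ℚ) else (Fintype.card α : ℚ)) ≠ 0 :=
          ne_of_gt (hwqpos n)
        field_simp [hwne, ne_of_gt hNrpos, hWne, hD]
        ring
    -- put it together
    have hstep : acap (machδ J) (machBet j G J) (machQ0 J hL) t X (n + 1)
        = (Fintype.card α : ℝ) ^ t *
          ((machBet j G J (astate (machδ J) (machQ0 J hL) X n) (X n) : ℚ) : ℝ) *
          acap (machδ J) (machBet j G J) (machQ0 J hL) t X n := rfl
    rw [hstep, ih, hbet, hkey]
    have hcR : (0:ℝ) < (Fintype.card α : ℝ) := by exact_mod_cast Fintype.card_pos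
    rw [show t * (n + 1 : ℕ) = t * n + t by push_cast; ring, Real.rpow_add hcR]
    push_cast
    ring

/-- the oracle sequence: the other AP subsequences -/
def YS (j : Fin d) (X : ℕ → α) : ℕ → ({k : Fin d // k ≠ j} → α) :=
  prodSeq (fun k => AP X d (k : Fin d).val)

variable (j G) in
/-- the true bet made by the relative gambler at step `M` -/
def betT (X : ℕ → α) (M : ℕ) : ℚ :=
  G.bet (G.state (YS j X) (AP X d j.val) M) (fun v => YS j X (M + v.val)) (AP X d j.val M)

variable (j G) in
def PRel (X : ℕ → α) (M : ℕ) : ℚ := ∏ i ∈ range M, betT j G X i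

theorem capRel_eq (s : ℝ) (X : ℕ → α) (M : ℕ) :
    G.capital s (YS j X) (AP X d j.val) M
      = ((Fintype.card α : ℝ) ^ s) ^ M * ((PRel j G X M : ℚ) : ℝ) := by
  induction M with
  | zero => simp [FSRG.capital, PRel]
  | succ M ih =>
    have h1 : G.capital s (YS j X) (AP X d j.val) (M + 1)
        = (Fintype.card α : ℝ) ^ s * (betT j G X M : ℝ) *
          G.capital s (YS j X) (AP X d j.val) M := rfl
    rw [h1, ih]
    have h2 : PRel j G X (M + 1) = PRel j G X M * betT j G X M :=
      Finset.prod_range_succ _ _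
    rw [h2]
    push_cast
    ring

theorem win_true (J : ℕ) (X : ℕ → α) (b i : ℕ) :
    win j ℓ (fun p => X ((J * d) * b + p)) i = fun v => YS j X (b * J + i + v.val) := by
  funext v k
  show X ((J * d) * b + ((i + v.val) * d + (k : Fin d).val))
    = X ((k : Fin d).val + (b * J + i + v.val) * d)
  congr 1
  ring

theorem sym_true (J : ℕ) (X : ℕ → α) (b i : ℕ) :
    (fun p => X ((J * d) * b + p)) (i * d + j.val) = AP X d j.val (b * J + i) := by
  show X ((J * d) * b + (i * d + j.val)) = X (j.val + (b * J + i) * d)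
  congr 1
  ring

theorem locq_true (J : ℕ) (X : ℕ → α) (b i : ℕ) :
    locq j G (fun p => X ((J * d) * b + p)) (G.state (YS j X) (AP X d j.val) (b * J)) i
      = G.state (YS j X) (AP X d j.val) (b * J + i) := by
  induction i with
  | zero => rfl
  | succ i ih =>
    have h1 : locq j G (fun p => X ((J * d) * b + p))
        (G.state (YS j X) (AP X d j.val) (b * J)) (i + 1)
        = G.δ (locq j G (fun p => X ((J * d) * b + p))
            (G.state (YS j X) (AP X d j.val) (b * J)) i)
          (win j ℓ (fun p => X ((J * d) * b + p)) i)
          ((fun p => X ((J * d) * b + p)) (i * d + j.val)) := rfl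
    have h2 : G.state (YS j X) (AP X d j.val) (b * J + i + 1)
        = G.δ (G.state (YS j X) (AP X d j.val) (b * J + i))
          (fun v => YS j X (b * J + i + v.val)) (AP X d j.val (b * J + i)) := rfl
    rw [h1, ih, win_true, sym_true, ← h2]
    rfl

theorem wt_true (J : ℕ) (X : ℕ → α) (b N : ℕ) :
    wt j G (fun p => X ((J * d) * b + p)) (G.state (YS j X) (AP X d j.val) (b * J)) N
      = ∏ i ∈ range N, betT j G X (b * J + i) := by
  unfold wt
  refine Finset.prod_congr rfl fun i _ => ?_
  rw [locq_true, win_true, sym_true]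
  rfl

theorem PRel_split (X : ℕ → α) (M N : ℕ) :
    PRel j G X (M + N) = PRel j G X M * ∏ i ∈ range N, betT j G X (M + i) :=
  Finset.prod_range_add _ _ _

theorem num_ge (J : ℕ) (X : ℕ → α) (b r : ℕ) (hr : r ≤ J * d) :
    (Fintype.card α : ℚ) ^ (((J + ℓ) * d) - (Finset.univ.filter
        (fun p : Fin ((J + ℓ) * d) => r ≤ p.val ∧ ¬ p.val % d = j.val)).card) *
      ∏ i ∈ range (jb d j.val r), betT j G X (b * J + i)
      ≤ num j G ((J + ℓ) * d) (fun p => X ((J * d) * b + p)) r := by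
  classical
  rw [← wt_true]
  unfold num
  have hstep : ∑ z : Fin ((J + ℓ) * d) → α,
      wt j G (comb r (fun p => X ((J * d) * b + p)) (extz ((J + ℓ) * d) z))
        (G.state (YS j X) (AP X d j.val) (b * J)) (jb d j.val r)
      ≤ ∑ q : Fin (m + 1), ∑ z : Fin ((J + ℓ) * d) → α,
        wt j G (comb r (fun p => X ((J * d) * b + p)) (extz ((J + ℓ) * d) z)) q
          (jb d j.val r) :=
    Finset.single_le_sum
      (fun q _ => Finset.sum_nonneg fun z _ => wt_nonneg) (Finset.mem_univ _)
  refine le_trans ?_ hstep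
  refine sum_ge_filter _ (fun z => wt_nonneg) _
    (fun p => X ((J * d) * b + p.val)) _ wt_nonneg ?_
  intro z hz
  refine wt_congr ?_ ?_
  · intro p hp hlt
    have hpE : p < (J + ℓ) * d := by
      refine lt_of_lt_of_le hlt (Nat.mul_le_mul_right d ?_)
      have : jb d j.val r ≤ J := jb_le j.isLt hr
      omega
    unfold comb
    by_cases hpr : p < r
    · rw [if_pos hpr]
    · rw [if_neg hpr]
      unfold extz
      rw [dif_pos hpE]
      exact hz ⟨p, hpE⟩ (Finset.mem_filter.mpr
        ⟨Finset.mem_univ _, Nat.le_of_not_lt hpr, hp⟩)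
  · intro i hi
    have := lt_of_lt_jb j.isLt hi
    unfold comb
    rw [if_pos this]

theorem card_filter_nonj_le (J r : ℕ) :
    (Finset.univ.filter
        (fun p : Fin ((J + ℓ) * d) => r ≤ p.val ∧ ¬ p.val % d = j.val)).card
      ≤ (J + ℓ) * d - (J + ℓ) := by
  classical
  have hsub : (Finset.univ.filter
        (fun p : Fin ((J + ℓ) * d) => r ≤ p.val ∧ ¬ p.val % d = j.val))
      ⊆ Finset.univ.filter (fun p : Fin ((J + ℓ) * d) => ¬ p.val % d = j.val) := by
    intro p hp
    rw [Finset.mem_filter] at hp ⊢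
    exact ⟨hp.1, hp.2.2⟩
  refine le_trans (Finset.card_le_card hsub) ?_
  have hbij : (Finset.univ.filter
        (fun p : Fin ((J + ℓ) * d) => ¬ p.val % d = j.val)).card
      = ((range ((J + ℓ) * d)).filter (fun p => ¬ p % d = j.val)).card := by
    refine Finset.card_bij (fun p _ => p.val) ?_ ?_ ?_
    · intro p hp
      rw [Finset.mem_filter] at hp ⊢
      exact ⟨Finset.mem_range.mpr p.isLt, hp.2⟩
    · intro p _ q _ h
      exact Fin.ext h
    · intro q hq
      rw [Finset.mem_filter, Finset.mem_range] at hq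
      exact ⟨⟨q, hq.1⟩, Finset.mem_filter.mpr ⟨Finset.mem_univ _, hq.2⟩, rfl⟩
  rw [hbij, njc_card j.isLt (J + ℓ)]

theorem card_filter_nonj_top (J : ℕ) :
    (Finset.univ.filter
        (fun p : Fin ((J + ℓ) * d) => J * d ≤ p.val ∧ ¬ p.val % d = j.val)).card
      ≤ ℓ * d - ℓ := by
  classical
  rw [← njc_card j.isLt ℓ]
  refine Finset.card_le_card_of_injOn (fun p => p.val - J * d) ?_ ?_
  · intro p hp
    rw [Finset.mem_coe, Finset.mem_filter] at hp
    obtain ⟨-, h1, h2⟩ := hp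
    have hE : p.val < (J + ℓ) * d := p.isLt
    have hadd : (J + ℓ) * d = J * d + ℓ * d := by ring
    obtain ⟨q, hq⟩ : ∃ q, p.val = J * d + q := ⟨p.val - J * d, by omega⟩
    have hsub : p.val - J * d = q := by omega
    rw [Finset.mem_coe, Finset.mem_filter]
    simp only
    rw [hsub]
    have hm : p.val % d = q % d := by
      rw [hq, Nat.mul_comm J d, Nat.mul_add_mod]
    constructor
    · rw [Finset.mem_range]; omega
    · rw [← hm]; exact h2
  · intro p hp q hq hpq
    rw [Finset.mem_coe, Finset.mem_filter] at hp hq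
    apply Fin.ext
    simp only at hpq
    omega

theorem Wq_val (N : ℕ) :
    (∏ p ∈ range (N * d), (if p % d = j.val then (1:ℚ) else (Fintype.card α : ℚ)))
      = (Fintype.card α : ℚ) ^ (N * d - N) := by
  classical
  rw [Finset.prod_ite, Finset.prod_const_one, one_mul, Finset.prod_const,
    njc_card j.isLt N]

theorem prod_num_ge (J : ℕ) (X : ℕ → α) (hd : 0 < d) (b : ℕ) :
    ((Fintype.card α : ℚ) ^ (J * d + ℓ)) ^ b * PRel j G X (b * J)
      ≤ ∏ b' ∈ range b, num j G ((J + ℓ) * d) (fun p => X ((J * d) * b' + p)) (J * d) := by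
  have hcq : (0:ℚ) < (Fintype.card α : ℚ) := by exact_mod_cast Fintype.card_pos
  have hcq1 : (1:ℚ) ≤ (Fintype.card α : ℚ) := by exact_mod_cast Fintype.card_pos
  induction b with
  | zero => simp [PRel]
  | succ b ih =>
    rw [Finset.prod_range_succ]
    have hsplit : PRel j G X ((b + 1) * J)
        = PRel j G X (b * J) * ∏ i ∈ range J, betT j G X (b * J + i) := by
      rw [show (b + 1) * J = b * J + J by ring]
      exact PRel_split X (b * J) J
    have hstep : (Fintype.card α : ℚ) ^ (J * d + ℓ) *
        ∏ i ∈ range J, betT j G X (b * J + i)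
        ≤ num j G ((J + ℓ) * d) (fun p => X ((J * d) * b + p)) (J * d) := by
      have h1 := num_ge (j := j) (G := G) J X b (J * d) le_rfl
      rw [jb_mul j.isLt J] at h1
      refine le_trans ?_ h1
      refine mul_le_mul_of_nonneg_right ?_
        (Finset.prod_nonneg fun i _ => G.bet_nonneg _ _ _)
      refine pow_le_pow_right₀ hcq1 ?_
      have hcF := card_filter_nonj_top (ℓ := ℓ) (j := j) J
      have hE' : (J + ℓ) * d = J * d + ℓ * d := by ring
      have hl : ℓ ≤ ℓ * d := Nat.le_mul_of_pos_right ℓ hd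
      omega
    calc ((Fintype.card α : ℚ) ^ (J * d + ℓ)) ^ (b + 1) * PRel j G X ((b + 1) * J)
        = (((Fintype.card α : ℚ) ^ (J * d + ℓ)) ^ b * PRel j G X (b * J)) *
          ((Fintype.card α : ℚ) ^ (J * d + ℓ) * ∏ i ∈ range J, betT j G X (b * J + i)) := by
          rw [hsplit, pow_succ]; ring
      _ ≤ (∏ b' ∈ range b, num j G ((J + ℓ) * d) (fun p => X ((J * d) * b' + p)) (J * d)) *
          num j G ((J + ℓ) * d) (fun p => X ((J * d) * b + p)) (J * d) := by
          refine mul_le_mul ih hstep (mul_nonneg (by positivity)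
            (Finset.prod_nonneg fun i _ => G.bet_nonneg _ _ _))
            (Finset.prod_nonneg fun b' _ => num_nonneg)

theorem num_pos_of_betpos (J : ℕ) (X : ℕ → α) (hb : ∀ M, 0 < betT j G X M)
    (b r : ℕ) (hr : r ≤ J * d) :
    0 < num j G ((J + ℓ) * d) (fun p => X ((J * d) * b + p)) r := by
  have hcq : (0:ℚ) < (Fintype.card α : ℚ) := by exact_mod_cast Fintype.card_pos
  refine lt_of_lt_of_le ?_ (num_ge (j := j) (G := G) J X b r hr)
  exact mul_pos (pow_pos hcq _) (Finset.prod_pos fun i _ => hb _)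

theorem Qf_ge (J : ℕ) (X : ℕ → α) (hd : 0 < d) (hJ : 0 < J)
    (hbnn : ∀ M, 0 ≤ betT j G X M) (N : ℕ) :
    ((Fintype.card α : ℚ) ^ (J * d + ℓ)) ^ (N / J) * (Fintype.card α : ℚ) ^ (J + ℓ) *
        PRel j G X N /
      (((m + 1 : ℚ) * (Fintype.card α : ℚ) ^ ((J + ℓ) * d)) ^ (N / J + 1) *
        (Fintype.card α : ℚ) ^ (N * d - N))
      ≤ Qf j G J X (N * d) := by
  have hcq : (0:ℚ) < (Fintype.card α : ℚ) := by exact_mod_cast Fintype.card_pos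
  have hcq1 : (1:ℚ) ≤ (Fintype.card α : ℚ) := by exact_mod_cast Fintype.card_pos
  unfold Qf
  rw [Nat.mul_div_mul_right N J hd, Nat.mul_mod_mul_right d N J, Wq_val (j := j)]
  have hDpos : (0:ℚ) < ((m + 1 : ℚ) * (Fintype.card α : ℚ) ^ ((J + ℓ) * d)) ^ (N / J + 1) *
      (Fintype.card α : ℚ) ^ (N * d - N) := by positivity
  rw [div_le_div_iff_of_pos_right hDpos]
  -- numerator bound
  have hsplit : PRel j G X N = PRel j G X ((N / J) * J) *
      ∏ i ∈ range (N % J), betT j G X ((N / J) * J + i) := by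
    have h1 : (N / J) * J + N % J = N := by
      have h2 := Nat.div_add_mod N J
      have h3 : (N / J) * J = J * (N / J) := Nat.mul_comm _ _
      omega
    conv_lhs => rw [← h1]
    exact PRel_split X _ _
  have hpart : (Fintype.card α : ℚ) ^ (J + ℓ) *
      ∏ i ∈ range (N % J), betT j G X ((N / J) * J + i)
      ≤ num j G ((J + ℓ) * d) (fun p => X ((J * d) * (N / J) + p)) ((N % J) * d) := by
    have hr : (N % J) * d ≤ J * d :=
      Nat.mul_le_mul_right d (le_of_lt (Nat.mod_lt N hJ))
    have h1 := num_ge (j := j) (G := G) J X (N / J) ((N % J) * d) hr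
    rw [jb_mul j.isLt (N % J)] at h1
    refine le_trans ?_ h1
    refine mul_le_mul_of_nonneg_right ?_ (Finset.prod_nonneg fun i _ => hbnn _)
    refine pow_le_pow_right₀ hcq1 ?_
    have hcF := card_filter_nonj_le (ℓ := ℓ) (j := j) J ((N % J) * d)
    have hE' : (J + ℓ) * d = J * d + ℓ * d := by ring
    have hj' : J ≤ J * d := Nat.le_mul_of_pos_right J hd
    have hl : ℓ ≤ ℓ * d := Nat.le_mul_of_pos_right ℓ hd
    omega
  calc ((Fintype.card α : ℚ) ^ (J * d + ℓ)) ^ (N / J) * (Fintype.card α : ℚ) ^ (J + ℓ) *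
        PRel j G X N
      = (((Fintype.card α : ℚ) ^ (J * d + ℓ)) ^ (N / J) * PRel j G X ((N / J) * J)) *
        ((Fintype.card α : ℚ) ^ (J + ℓ) *
          ∏ i ∈ range (N % J), betT j G X ((N / J) * J + i)) := by
        rw [hsplit]; ring
    _ ≤ (∏ b' ∈ range (N / J),
          num j G ((J + ℓ) * d) (fun p => X ((J * d) * b' + p)) (J * d)) *
        num j G ((J + ℓ) * d) (fun p => X ((J * d) * (N / J) + p)) ((N % J) * d) := by
        refine mul_le_mul (prod_num_ge J X hd (N / J)) hpart
          (mul_nonneg (by positivity) (Finset.prod_nonneg fun i _ => hbnn _))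
          (Finset.prod_nonneg fun b' _ => num_nonneg)

end Main

theorem main_construction {α : Type} [Fintype α] (hα : 2 ≤ Fintype.card α)
    (X : ℕ → α) {d : ℕ} (j : Fin d) {ℓ m : ℕ}
    (G : FSRG α ({k : Fin d // k ≠ j} → α) ℓ m) {s : ℝ} (hs : 0 ≤ s)
    (hG : G.Succeeds s (YS j X) (AP X d j.val)) {t : ℝ}
    (ht : (s + (d : ℝ) - 1) / d < t) :
    ∃ (m' : ℕ) (G' : FSG α m'), G'.Succeeds t X := by
  classical
  haveI : Nonempty α := Fintype.card_pos_iff.mp (by omega)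
  have hd : 0 < d := j.pos
  have hcR : (0:ℝ) < (Fintype.card α : ℝ) := by exact_mod_cast Fintype.card_pos
  have hcR1 : (1:ℝ) ≤ (Fintype.card α : ℝ) := by exact_mod_cast Fintype.card_pos
  have hcR2 : (2:ℝ) ≤ (Fintype.card α : ℝ) := by exact_mod_cast hα
  set cc : ℝ := (Fintype.card α : ℝ) with hcc
  -- positivity of the relative capital
  have hcapnn : ∀ n, 0 ≤ G.capital s (YS j X) (AP X d j.val) n := by
    intro n
    induction n with
    | zero => norm_num [FSRG.capital]
    | succ n ih =>
      have h1 : G.capital s (YS j X) (AP X d j.val) (n + 1)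
          = cc ^ s * (betT j G X n : ℝ) * G.capital s (YS j X) (AP X d j.val) n := rfl
      rw [h1]
      have hb : (0:ℝ) ≤ (betT j G X n : ℝ) := by exact_mod_cast G.bet_nonneg _ _ _
      positivity
  have hcappos : ∀ n, 0 < G.capital s (YS j X) (AP X d j.val) n := by
    by_contra hcon
    push_neg at hcon
    obtain ⟨n0, hn0⟩ := hcon
    have hz0 : G.capital s (YS j X) (AP X d j.val) n0 = 0 := le_antisymm hn0 (hcapnn n0)
    have hz : ∀ k, G.capital s (YS j X) (AP X d j.val) (n0 + k) = 0 := by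
      intro k
      induction k with
      | zero => exact hz0
      | succ k ih =>
        have h1 : G.capital s (YS j X) (AP X d j.val) (n0 + k + 1)
            = cc ^ s * (betT j G X (n0 + k) : ℝ) *
              G.capital s (YS j X) (AP X d j.val) (n0 + k) := rfl
        rw [show n0 + (k+1) = n0 + k + 1 by ring, h1, ih, mul_zero]
    set C := ∑ k ∈ Finset.range (n0 + 1), G.capital s (YS j X) (AP X d j.val) k with hC
    have hCge : ∀ k ≤ n0, G.capital s (YS j X) (AP X d j.val) k ≤ C :=
      fun k hk => Finset.single_le_sum (fun i _ => hcapnn i)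
        (Finset.mem_range.mpr (by omega))
    have hCnn : 0 ≤ C := Finset.sum_nonneg fun i _ => hcapnn i
    obtain ⟨n', hn'⟩ := hG C
    rcases le_or_gt n' n0 with h | h
    · exact absurd hn' (not_lt.mpr (hCge n' h))
    · have : G.capital s (YS j X) (AP X d j.val) n' = 0 := by
        have := hz (n' - n0)
        rwa [show n0 + (n' - n0) = n' by omega] at this
      rw [this] at hn'
      linarith
  have hbetpos : ∀ M, (0:ℚ) < betT j G X M := by
    intro M
    have h1 : G.capital s (YS j X) (AP X d j.val) (M + 1)
        = cc ^ s * (betT j G X M : ℝ) * G.capital s (YS j X) (AP X d j.val) M := rfl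
    have h2 := hcappos (M + 1)
    rw [h1] at h2
    have h3 : (0:ℝ) < (betT j G X M : ℝ) := by
      by_contra hb
      push_neg at hb
      have h4 : cc ^ s * (betT j G X M : ℝ) ≤ 0 :=
        mul_nonpos_of_nonneg_of_nonpos (Real.rpow_nonneg hcR.le s) hb
      have h5 : cc ^ s * (betT j G X M : ℝ) * G.capital s (YS j X) (AP X d j.val) M ≤ 0 :=
        mul_nonpos_of_nonpos_of_nonneg h4 (hcapnn M)
      linarith
    exact_mod_cast h3
  -- choice of J
  have hdR : (0:ℝ) < (d:ℝ) := by exact_mod_cast hd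
  have hε : 0 < t * d - s - ((d:ℝ) - 1) := by
    rw [div_lt_iff₀ hdR] at ht
    nlinarith
  set ε : ℝ := t * d - s - ((d:ℝ) - 1) with hεdef
  set K1 : ℝ := ((m:ℝ) + 1) * cc ^ (ℓ * d - ℓ : ℕ) with hK1def
  have hK1pos : 0 < K1 := by positivity
  obtain ⟨M0, hM0⟩ := pow_unbounded_of_one_lt K1 (by norm_num : (1:ℝ) < 2)
  obtain ⟨J0, hJ0⟩ := exists_nat_ge ((M0 : ℝ) / ε)
  set J := max J0 1 with hJdef
  have hJ1 : 1 ≤ J := le_max_right _ _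
  have hJpos : 0 < J := hJ1
  have hJε : (M0:ℝ) ≤ (J:ℝ) * ε := by
    have h1 : (J0:ℝ) ≤ (J:ℝ) := by exact_mod_cast le_max_left J0 1
    have h2 : (M0:ℝ) / ε ≤ (J:ℝ) := le_trans hJ0 h1
    rw [div_le_iff₀ hε] at h2
    linarith
  have hK1J : K1 ≤ cc ^ ((J:ℝ) * ε) := by
    calc K1 ≤ (2:ℝ) ^ M0 := le_of_lt hM0
      _ = (2:ℝ) ^ ((M0 : ℕ) : ℝ) := (Real.rpow_natCast 2 M0).symm
      _ ≤ (2:ℝ) ^ ((J:ℝ) * ε) :=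
          Real.rpow_le_rpow_of_exponent_le (by norm_num) hJε
      _ ≤ cc ^ ((J:ℝ) * ε) :=
          Real.rpow_le_rpow (by norm_num) hcR2
            (mul_nonneg (Nat.cast_nonneg J) hε.le)
  have hL : 0 < J * d := Nat.mul_pos hJpos hd
  have hposn : ∀ b r, r ≤ J * d →
      0 < num j G ((J + ℓ) * d) (fun p => X ((J * d) * b + p)) r :=
    fun b r hr => num_pos_of_betpos J X hbetpos b r hr
  set K2 : ℝ := ((m:ℝ) + 1) * cc ^ ((J + ℓ) * d : ℕ) with hK2def
  have hK2pos : 0 < K2 := by positivity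
  -- key estimate
  have hkey : ∀ N : ℕ, G.capital s (YS j X) (AP X d j.val) N
      ≤ K2 * acap (machδ J) (machBet j G J) (machQ0 J hL) t X (N * d) := by
    intro N
    set b := N / J with hbdef
    rw [mach_inv J hL X t hposn (N * d), capRel_eq s X N]
    have hQR := Qf_ge (j := j) (G := G) J X hd hJpos (fun M => (hbetpos M).le) N
    set P : ℝ := ((PRel j G X N : ℚ) : ℝ) with hPdef
    have hPpos : 0 < P := by
      have := Finset.prod_pos (fun i (_ : i ∈ Finset.range N) => hbetpos i)
      rw [hPdef]
      exact_mod_cast this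
    set A1 : ℝ := (cc ^ (J * d + ℓ : ℕ)) ^ b with hA1def
    set A2 : ℝ := cc ^ (J + ℓ : ℕ) with hA2def
    set D : ℝ := ((m:ℝ) + 1) * cc ^ ((J + ℓ) * d : ℕ) with hDdef
    set W : ℝ := cc ^ (N * d - N : ℕ) with hWdef
    have hQRR : A1 * A2 * P / (D ^ (b + 1) * W) ≤ ((Qf j G J X (N * d) : ℚ) : ℝ) := by
      have := (Rat.cast_le (K := ℝ)).mpr hQR
      push_cast at this
      convert this using 2 <;> push_cast <;> ring
    have hA1pos : 0 < A1 := by positivity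
    have hA2one : 1 ≤ A2 := one_le_pow₀ hcR1
    have hDpos : 0 < D := by positivity
    have hWpos : 0 < W := by positivity
    have htr : 0 ≤ cc ^ (t * ((N * d : ℕ) : ℝ)) := (Real.rpow_pos_of_pos hcR _).le
    refine le_trans ?_ (mul_le_mul_of_nonneg_left
      (mul_le_mul_of_nonneg_left hQRR htr) hK2pos.le)
    -- core scalar inequality
    have hcore : (cc ^ s) ^ N * (D ^ (b + 1) * W) ≤ K2 * cc ^ (t * ((N * d : ℕ) : ℝ)) * (A1 * A2) := by
      have hDK : D = K1 * cc ^ (J * d + ℓ : ℕ) := by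
        have hexp : (ℓ * d - ℓ) + (J * d + ℓ) = (J + ℓ) * d := by
          have h1 : (J + ℓ) * d = J * d + ℓ * d := by ring
          have h2 : ℓ ≤ ℓ * d := Nat.le_mul_of_pos_right ℓ hd
          omega
        rw [hDdef, hK1def, mul_assoc, ← pow_add, hexp]
      have hDb : D ^ b = K1 ^ b * A1 := by rw [hDK, mul_pow, hA1def]
      have e1 : (cc ^ s) ^ N = cc ^ (s * N) := by
        rw [Real.rpow_mul hcR.le, Real.rpow_natCast]
      have e2 : K1 ^ b ≤ cc ^ ((N:ℝ) * ε) := by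
        calc K1 ^ b ≤ (cc ^ ((J:ℝ) * ε)) ^ b := pow_le_pow_left₀ hK1pos.le hK1J b
          _ = cc ^ ((J:ℝ) * ε * b) := by
              rw [Real.rpow_mul hcR.le ((J:ℝ) * ε), Real.rpow_natCast]
          _ ≤ cc ^ ((N:ℝ) * ε) := by
              refine Real.rpow_le_rpow_of_exponent_le hcR1 ?_
              have hbJ : b * J ≤ N := Nat.div_mul_le_self N J
              have hbJR : (b:ℝ) * (J:ℝ) ≤ (N:ℝ) := by exact_mod_cast hbJ
              nlinarith [hε.le, Nat.cast_nonneg (α := ℝ) b]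
      have e3 : W = cc ^ (((N:ℝ)) * d - N) := by
        rw [hWdef, ← Real.rpow_natCast cc (N * d - N)]
        congr 1
        have h2 : N ≤ N * d := Nat.le_mul_of_pos_right N hd
        push_cast [Nat.cast_sub h2]
        ring
      have hfin : cc ^ (s * N) * cc ^ ((N:ℝ) * ε) * cc ^ (((N:ℝ)) * d - N)
          = cc ^ (t * ((N * d : ℕ) : ℝ)) := by
        rw [← Real.rpow_add hcR, ← Real.rpow_add hcR]
        congr 1
        push_cast
        rw [hεdef]
        ring
      calc (cc ^ s) ^ N * (D ^ (b + 1) * W)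
          = ((cc ^ s) ^ N * (K1 ^ b) * W) * A1 * D := by
            rw [pow_succ, hDb]; ring
        _ ≤ (cc ^ (s * N) * cc ^ ((N:ℝ) * ε) * cc ^ (((N:ℝ)) * d - N)) * A1 * D := by
            refine mul_le_mul_of_nonneg_right (mul_le_mul_of_nonneg_right ?_ hA1pos.le) hDpos.le
            rw [e1, e3]
            refine mul_le_mul_of_nonneg_right (mul_le_mul_of_nonneg_left e2 ?_) ?_
            · positivity
            · positivity
        _ = cc ^ (t * ((N * d : ℕ) : ℝ)) * A1 * D := by rw [hfin]
        _ ≤ cc ^ (t * ((N * d : ℕ) : ℝ)) * A1 * D * A2 :=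
            le_mul_of_one_le_right (by positivity) hA2one
        _ = K2 * cc ^ (t * ((N * d : ℕ) : ℝ)) * (A1 * A2) := by
            have hKD : K2 = D := by rw [hK2def, hDdef]
            rw [hKD]; ring
    -- wrap up: divide
    have hDW : 0 < D ^ (b + 1) * W := by positivity
    have hrhs : K2 * (cc ^ (t * ((N * d : ℕ) : ℝ)) * (A1 * A2 * P / (D ^ (b + 1) * W)))
        = (K2 * cc ^ (t * ((N * d : ℕ) : ℝ)) * (A1 * A2) * P) / (D ^ (b + 1) * W) := by
      rw [div_eq_mul_inv, div_eq_mul_inv]; ring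
    rw [hrhs, le_div_iff₀ hDW]
    calc (cc ^ s) ^ N * P * (D ^ (b + 1) * W)
        = ((cc ^ s) ^ N * (D ^ (b + 1) * W)) * P := by ring
      _ ≤ (K2 * cc ^ (t * ((N * d : ℕ) : ℝ)) * (A1 * A2)) * P :=
          mul_le_mul_of_nonneg_right hcore hPpos.le
      _ = K2 * cc ^ (t * ((N * d : ℕ) : ℝ)) * (A1 * A2) * P := by ring
  -- build the FSG and conclude
  haveI : Nonempty (Fin (J * d) × (Fin (J * d) → α)) :=
    ⟨(⟨0, hL⟩, fun _ => Classical.arbitrary α)⟩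
  obtain ⟨m', G', hG'⟩ := bridge (machδ J) (machBet j G J) (machQ0 J hL)
    (machBet_nonneg J) (machBet_sum J)
  refine ⟨m', G', ?_⟩
  intro C
  obtain ⟨N, hN⟩ := hG ((max C 0 + 1) * K2)
  refine ⟨N * d, ?_⟩
  have h1 := hkey N
  have h2 : (max C 0 + 1) * K2 < K2 * acap (machδ J) (machBet j G J) (machQ0 J hL) t X (N * d) :=
    lt_of_lt_of_le hN h1
  rw [hG']
  have h3 : max C 0 + 1 < acap (machδ J) (machBet j G J) (machQ0 J hL) t X (N * d) := by
    rw [mul_comm] at h2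
    exact lt_of_mul_lt_mul_left h2 hK2pos.le
  have h4 : C ≤ max C 0 := le_max_left C 0
  linarith

theorem uniform_fsg_succeeds {α : Type} [Fintype α] (hα : 2 ≤ Fintype.card α)
    (X : ℕ → α) : ∃ (m : ℕ) (G : FSG α m), G.Succeeds 2 X := by
  have hc0 : (Fintype.card α : ℚ) ≠ 0 := by
    have : Fintype.card α ≠ 0 := by omega
    exact_mod_cast this
  have hcR : (0:ℝ) < (Fintype.card α : ℝ) := by
    have : 0 < Fintype.card α := by omega
    exact_mod_cast this
  refine ⟨0, ⟨fun q _ => q, fun _ _ => (Fintype.card α : ℚ)⁻¹,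
    fun _ _ => by positivity, fun _ => ?_, 0⟩, ?_⟩
  · rw [Finset.sum_const, Finset.card_univ, nsmul_eq_mul, mul_inv_cancel₀ hc0]
  · set G : FSG α 0 := ⟨fun q _ => q, fun _ _ => (Fintype.card α : ℚ)⁻¹,
      fun _ _ => by positivity, fun _ => by
        rw [Finset.sum_const, Finset.card_univ, nsmul_eq_mul, mul_inv_cancel₀ hc0], 0⟩
      with hGdef
    have hcap : ∀ n, G.capital 2 X n = (Fintype.card α : ℝ) ^ n := by
      intro n
      induction n with
      | zero => rfl
      | succ n ih =>
        have h1 : G.capital 2 X (n + 1)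
            = (Fintype.card α : ℝ) ^ (2:ℝ) * (((Fintype.card α : ℚ)⁻¹ : ℚ) : ℝ) *
              G.capital 2 X n := rfl
        rw [h1, ih, show (2:ℝ) = ((2:ℕ):ℝ) by norm_num, Real.rpow_natCast]
        push_cast
        field_simp
        ring
    intro C
    have hc1 : (1:ℝ) < (Fintype.card α : ℝ) := by
      have : 1 < Fintype.card α := by omega
      exact_mod_cast this
    obtain ⟨n, hn⟩ := pow_unbounded_of_one_lt C hc1
    exact ⟨n, by rw [hcap]; exact hn⟩

theorem plain_to_rel {α β : Type} [Fintype α] [Fintype β] {m : ℕ} (G : FSG α m)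
    (s : ℝ) (X : ℕ → α) (Y : ℕ → β) (h : G.Succeeds s X) :
    ∃ (ℓ m' : ℕ) (G' : FSRG α β ℓ m'), G'.Succeeds s Y X := by
  refine ⟨0, m, ⟨fun q _ a => G.δ q a, fun q _ a => G.bet q a,
    fun q _ a => G.bet_nonneg q a, fun q _ => G.bet_sum q, G.q₀⟩, ?_⟩
  set G' : FSRG α β 0 m := ⟨fun q _ a => G.δ q a, fun q _ a => G.bet q a,
    fun q _ a => G.bet_nonneg q a, fun q _ => G.bet_sum q, G.q₀⟩ with hG'def
  have hst : ∀ n, G'.state Y X n = G.state X n := by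
    intro n
    induction n with
    | zero => rfl
    | succ n ih =>
      rw [show G'.state Y X (n+1) = G'.δ (G'.state Y X n) (fun j => Y (n + j.val)) (X n) from rfl, ih]
      simp [FSG.state, hG'def]
  have hcap : ∀ n, G'.capital s Y X n = G.capital s X n := by
    intro n
    induction n with
    | zero => rfl
    | succ n ih =>
      rw [show G'.capital s Y X (n+1) = (Fintype.card α : ℝ) ^ s * (G'.bet (G'.state Y X n) (fun j => Y (n + j.val)) (X n) : ℝ) * G'.capital s Y X n from rfl, ih, hst]
      simp [FSG.capital, hG'def]
  intro C
  obtain ⟨n, hn⟩ := h C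
  exact ⟨n, by rw [hcap]; exact hn⟩

end APX
/-- `dim_FS(A_{d,j}) ≥ dim_FS^{{A_{d,k} : k ≠ j}}(A_{d,j}) ≥ d(dim_FS(X) − (d−1)/d)`. -/
theorem AP_relative_dim_bounds {α : Type} [Fintype α] (hα : 2 ≤ Fintype.card α)
    (X : ℕ → α) (d : ℕ) (hd : 0 < d) (j : Fin d) :
    dimFSRelFam (AP X d j.val) (fun k : {k : Fin d // k ≠ j} => AP X d (k : Fin d).val)
        ≤ dimFS (AP X d j.val) ∧
    (d : ℝ) * (dimFS X - ((d : ℝ) - 1) / d) ≤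
      dimFSRelFam (AP X d j.val)
        (fun k : {k : Fin d // k ≠ j} => AP X d (k : Fin d).val) := by
  classical
  have hplainA : {s : ℝ | 0 ≤ s ∧ ∃ (m : ℕ) (G : FSG α m),
      G.Succeeds s (AP X d j.val)}.Nonempty := by
    obtain ⟨m, G, hG⟩ := APX.uniform_fsg_succeeds hα (AP X d j.val)
    exact ⟨2, by norm_num, m, G, hG⟩
  have hsub : {s : ℝ | 0 ≤ s ∧ ∃ (m : ℕ) (G : FSG α m), G.Succeeds s (AP X d j.val)}
      ⊆ {s : ℝ | 0 ≤ s ∧ ∃ (ℓ m : ℕ)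
          (G : FSRG α ({k : Fin d // k ≠ j} → α) ℓ m),
          G.Succeeds s (prodSeq (fun k : {k : Fin d // k ≠ j} => AP X d (k : Fin d).val))
            (AP X d j.val)} := by
    rintro s ⟨hs0, m, G, hG⟩
    exact ⟨hs0, APX.plain_to_rel G s _ _ hG⟩
  have hbddrel : BddBelow {s : ℝ | 0 ≤ s ∧ ∃ (ℓ m : ℕ)
      (G : FSRG α ({k : Fin d // k ≠ j} → α) ℓ m),
      G.Succeeds s (prodSeq (fun k : {k : Fin d // k ≠ j} => AP X d (k : Fin d).val))
        (AP X d j.val)} := ⟨0, fun x hx => hx.1⟩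
  have hrelne : {s : ℝ | 0 ≤ s ∧ ∃ (ℓ m : ℕ)
      (G : FSRG α ({k : Fin d // k ≠ j} → α) ℓ m),
      G.Succeeds s (prodSeq (fun k : {k : Fin d // k ≠ j} => AP X d (k : Fin d).val))
        (AP X d j.val)}.Nonempty := by
    obtain ⟨x, hx⟩ := hplainA
    exact ⟨x, hsub hx⟩
  have hdR : (0:ℝ) < (d:ℝ) := by exact_mod_cast hd
  have hd1 : (1:ℝ) ≤ (d:ℝ) := by exact_mod_cast hd
  constructor
  · exact csInf_le_csInf hbddrel hplainA hsub
  · show (d : ℝ) * (dimFS X - ((d : ℝ) - 1) / d) ≤ sInf _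
    refine le_csInf hrelne ?_
    rintro s ⟨hs0, ℓ, m, G, hG⟩
    have hX : dimFS X ≤ (s + (d:ℝ) - 1) / d := by
      have hbddX : BddBelow {s : ℝ | 0 ≤ s ∧ ∃ (m : ℕ) (G : FSG α m), G.Succeeds s X} :=
        ⟨0, fun x hx => hx.1⟩
      have hneX : {s : ℝ | 0 ≤ s ∧ ∃ (m : ℕ) (G : FSG α m), G.Succeeds s X}.Nonempty := by
        obtain ⟨m', G', hG'⟩ := APX.uniform_fsg_succeeds hα X
        exact ⟨2, by norm_num, m', G', hG'⟩
      rw [dimFS, Real.sInf_le_iff hbddX hneX]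
      intro ε hε
      have ht : (s + (d:ℝ) - 1) / d < (s + (d:ℝ) - 1) / d + ε / 2 := by linarith
      obtain ⟨m', G', hG'⟩ := APX.main_construction hα X j G hs0 hG ht
      have htnn : 0 ≤ (s + (d:ℝ) - 1) / d := div_nonneg (by linarith) hdR.le
      exact ⟨(s + (d:ℝ) - 1) / d + ε / 2, ⟨by linarith, m', G', hG'⟩, by linarith⟩
    have h1 : (d:ℝ) * ((s + (d:ℝ) - 1) / d) = s + (d:ℝ) - 1 := by field_simp
    have h2 : (d:ℝ) * (((d:ℝ) - 1) / d) = (d:ℝ) - 1 := by field_simp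
    have h3 := mul_le_mul_of_nonneg_left hX hdR.le
    rw [h1] at h3
    rw [mul_sub, h2]
    linarith
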